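/- arXiv:1909.02139 — 2 statements merged into one kernel-verified Lean document; each statement's English description precedes it below -/
import Mathlib

section
/- (Consistency of the sample variance in each true spike direction.) Under the spiked mixture model with Assumptions (A1)–(A4), assume additionally that τ_{k,1}^{(n)}/τ_{k,2}^{(n)} → 0 for every k ∈ I_out. Then for every spike index k ∈ {1,…,K}, the quadratic form of the sample covariance matrix in the true direction U_k^{(n)} is ratio-consistent: (1/λ_k^{(n)}) ⟨U_k^{(n)}, Σ̂^{(n)} U_k^{(n)}⟩ = (1/(n λ_k^{(n)})) Σ_{j=1}^{n} (y_{kj}^{(n)})² → 1 almost surely as n → ∞; equivalently, (1/λ_k^{(n)}) Σ_{i=1}^{d(n)} λ̂_i^{(n)} ⟨U_k^{(n)}, Û_i^{(n)}⟩² → 1 almost surely. -/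
open MeasureTheory ProbabilityTheory Filter Finset Asymptotics ENNReal

lemma aux_slln {Ω : Type} [MeasureSpace Ω] [IsProbabilityMeasure (ℙ : Measure Ω)]
    (z : ℕ × ℕ → Ω → ℝ) (B : ℕ × ℕ → Ω → Bool)
    (hzmeas : ∀ p, Measurable (z p)) (hBmeas : ∀ p, Measurable (B p))
    (hindep : iIndepFun
      (Sum.elim z fun p ω => if B p ω then (1 : ℝ) else 0) ℙ)
    (hident : ∀ p q, IdentDistrib (z p) (z q) ℙ ℙ)
    (hmom4 : ∀ p, Integrable fun ω => (z p ω) ^ 4)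
    (wk : ℝ) (k : ℕ) (hBer : ∀ j : ℕ, (ℙ {ω | B (k, j) ω = true}).toReal = wk)
    (g : ℝ × ℝ → ℝ) (hg : Measurable g)
    (hgb : ∀ v (b : ℝ), b = 0 ∨ b = 1 → |g (v, b)| ≤ v ^ 2)
    (I : ℝ) (hI : (∫ ω, g (z (k, 1) ω, if B (k, 1) ω then (1:ℝ) else 0)) = I) :
    ∀ᵐ ω ∂ℙ, Tendsto (fun n : ℕ =>
        (∑ j ∈ Finset.range n, g (z (k, j + 1) ω, if B (k, j + 1) ω then (1:ℝ) else 0)) / n)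
      atTop (nhds I) := by
  classical
  set f : (ℕ × ℕ) ⊕ (ℕ × ℕ) → Ω → ℝ :=
    Sum.elim z (fun p ω => if B p ω then (1 : ℝ) else 0) with hf
  have hms : ∀ p : ℕ × ℕ, MeasurableSet {ω | B p ω = true} :=
    fun p => (hBmeas p) (measurableSet_singleton true)
  have hmeasf : ∀ i, Measurable (f i) := by
    rintro (p | p)
    · exact hzmeas p
    · exact Measurable.ite (hms p) measurable_const measurable_const
  have hpairmeas : ∀ j : ℕ, Measurable (fun ω => (z (k, j) ω, f (Sum.inr (k, j)) ω)) :=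
    fun j => (hzmeas _).prodMk (hmeasf _)
  -- equal measures of the Bernoulli sets
  have hPB : ∀ j j' : ℕ, ℙ {ω | B (k, j) ω = true} = ℙ {ω | B (k, j') ω = true} := by
    intro j j'
    exact (ENNReal.toReal_eq_toReal_iff' (measure_ne_top _ _) (measure_ne_top _ _)).mp
      ((hBer j).trans (hBer j').symm)
  -- maps of indicators agree
  have hmapind : ∀ j j' : ℕ,
      Measure.map (f (Sum.inr (k, j))) ℙ = Measure.map (f (Sum.inr (k, j'))) ℙ := by
    intro j j'
    ext A hA
    rw [Measure.map_apply (hmeasf _) hA, Measure.map_apply (hmeasf _) hA]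
    have hpre : ∀ jj : ℕ, (f (Sum.inr (k, jj))) ⁻¹' A =
        (if (1:ℝ) ∈ A then {ω | B (k, jj) ω = true} else ∅) ∪
        (if (0:ℝ) ∈ A then {ω | B (k, jj) ω = true}ᶜ else ∅) := by
      intro jj
      ext ω
      by_cases hb : B (k, jj) ω <;> by_cases h1 : (1:ℝ) ∈ A <;> by_cases h0 : (0:ℝ) ∈ A <;>
        simp [hf, hb, h1, h0]
    rw [hpre j, hpre j']
    by_cases h1 : (1:ℝ) ∈ A <;> by_cases h0 : (0:ℝ) ∈ A <;> simp [h1, h0]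
    · exact hPB j j'
    · rw [measure_compl (hms _) (measure_ne_top _ _), measure_compl (hms _) (measure_ne_top _ _),
        hPB j j']
  -- identically distributed pairs
  have hpairident : ∀ j j' : ℕ,
      IdentDistrib (fun ω => (z (k, j) ω, f (Sum.inr (k, j)) ω))
        (fun ω => (z (k, j') ω, f (Sum.inr (k, j')) ω)) ℙ ℙ := by
    intro j j'
    have hij : ∀ jj : ℕ, IndepFun (z (k, jj)) (f (Sum.inr (k, jj))) ℙ := fun jj =>
      hindep.indepFun (show (Sum.inl (k, jj) : (ℕ×ℕ) ⊕ (ℕ×ℕ)) ≠ Sum.inr (k, jj) by simp)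
    refine ⟨(hpairmeas j).aemeasurable, (hpairmeas j').aemeasurable, ?_⟩
    rw [(indepFun_iff_map_prod_eq_prod_map_map (hzmeas _).aemeasurable
        (hmeasf _).aemeasurable).mp (hij j),
      (indepFun_iff_map_prod_eq_prod_map_map (hzmeas _).aemeasurable
        (hmeasf _).aemeasurable).mp (hij j'),
      (hident (k, j) (k, j')).map_eq, hmapind j j']
  -- the sequence
  set X : ℕ → Ω → ℝ := fun j ω => g (z (k, j + 1) ω, f (Sum.inr (k, j + 1)) ω) with hX
  have hz2int : Integrable (fun ω => z (k, 1) ω ^ 2) := by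
    have h41 : Integrable (fun ω => z (k, 1) ω ^ 4 + 1) ℙ :=
      (hmom4 (k, 1)).add (integrable_const 1)
    refine h41.mono'
      (((hzmeas (k, 1)).pow_const 2).aestronglyMeasurable) (ae_of_all _ fun ω => ?_)
    have h := sq_nonneg (z (k, 1) ω ^ 2 - 1)
    rw [Real.norm_eq_abs, abs_of_nonneg (sq_nonneg _)]
    nlinarith [sq_nonneg (z (k, 1) ω)]
  have hintX : Integrable (X 0) := by
    refine hz2int.mono' ((hg.comp (hpairmeas 1)).aestronglyMeasurable)
      (ae_of_all _ fun ω => ?_)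
    rw [Real.norm_eq_abs]
    refine hgb _ _ ?_
    by_cases hb : B (k, 1) ω <;> simp [hf, hb]
  have hident' : ∀ i, IdentDistrib (X i) (X 0) ℙ ℙ := fun i => (hpairident (i + 1) 1).comp hg
  have hindep' : Pairwise (Function.onFun (IndepFun · · ℙ) X) := by
    intro i j hij
    have h4 := hindep.indepFun_prodMk_prodMk hmeasf
      (Sum.inl (k, i + 1)) (Sum.inr (k, i + 1)) (Sum.inl (k, j + 1)) (Sum.inr (k, j + 1))
      (by simp; omega) (by simp) (by simp) (by simp; omega)
    exact h4.comp hg hg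
  have hSL := strong_law_ae_real X hintX hindep' hident'
  have hIX : (∫ ω, X 0 ω) = I := hI
  rw [hIX] at hSL
  exact hSL

/-- `a ≻ b`: the ratio `a n / b n` tends to a limit in `(1, ∞]`. -/
def SuccSeq (a b : ℕ → ℝ) : Prop :=
  (∃ L : ℝ, 1 < L ∧ Filter.Tendsto (fun n => a n / b n) Filter.atTop (nhds L)) ∨
    Filter.Tendsto (fun n => a n / b n) Filter.atTop Filter.atTop

set_option maxHeartbeats 1000000 in
theorem stmt15
    {Ω : Type} [MeasureSpace Ω] [IsProbabilityMeasure (ℙ : Measure Ω)]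
    (K : ℕ) (w : ℕ → ℝ)
    (hw01 : ∀ i, 0 ≤ w i ∧ w i ≤ 1) (hwK : ∀ i, K < i → w i = 0)
    (z : ℕ × ℕ → Ω → ℝ) (B : ℕ × ℕ → Ω → Bool)
    (hzmeas : ∀ p, Measurable (z p)) (hBmeas : ∀ p, Measurable (B p))
    (hindep : iIndepFun
      (Sum.elim z fun p ω => if B p ω then (1 : ℝ) else 0) ℙ)
    (hident : ∀ p q, IdentDistrib (z p) (z q) ℙ ℙ)
    (hmean : ∀ p, ∫ ω, z p ω = 0)
    (hvar : ∀ p, ∫ ω, (z p ω) ^ 2 = 1)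
    (hmom4 : ∀ p, Integrable fun ω => (z p ω) ^ 4)
    (hBer : ∀ i j, (ℙ {ω | B (i, j) ω = true}).toReal = w i)
    (d : ℕ → ℕ) (hd : Tendsto d atTop atTop)
    (τ1 τ2 : ℕ → ℕ → ℝ)
    (hτ1 : ∀ n i, 0 < τ1 n i) (hτ2 : ∀ n i, 0 < τ2 n i)
    (y : ℕ → ℕ → ℕ → Ω → ℝ)
    (hy : ∀ n i j ω, y n i j ω =
      if B (i, j) ω then Real.sqrt (τ2 n i) * z (i, j) ω
      else Real.sqrt (τ1 n i) * z (i, j) ω)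
    (lam : ℕ → ℕ → ℝ)
    (hlam : ∀ n i, lam n i = if w i = 0 then τ1 n i else w i * τ2 n i)
    (clam : ℝ) (hclam : 0 < clam)
    (hA1 : ∀ ε > (0 : ℝ), ∀ᶠ n in atTop, ∀ i, K < i → i ≤ d n →
      |τ1 n i - clam| < ε ∧ |τ2 n i - clam| < ε)
    (hA2 : ∀ i, 1 ≤ i → i ≤ K → 0 < w i → Tendsto (fun n => τ1 n i) atTop (nhds clam))
    (c : ℝ≥0∞)
    (hc : Tendsto (fun n => (d n : ℝ≥0∞) / (n : ℝ≥0∞)) atTop (nhds c))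
    (M : ℕ) (hM : 1 ≤ M) (q : ℕ → ℕ) (pp : ℕ → ℕ)
    (hq : ∀ m, 1 ≤ m → m ≤ M → 0 < q m)
    (hpp0 : pp 0 = 0) (hpps : ∀ m, pp (m + 1) = pp m + q (m + 1))
    (hppM : pp M = K)
    (δ : ℕ → ℕ → ℝ)
    (hδpos : ∀ n m, 1 ≤ m → m ≤ M → 0 < δ n m)
    (hA3 : ∀ m, 1 ≤ m → m ≤ M → ∀ i, pp (m - 1) < i → i ≤ pp m →
      Tendsto (fun n => lam n i / δ n m) atTop (nhds 1))
    (hA4 : ∀ m, 1 ≤ m → m < M → SuccSeq (fun n => δ n m) fun n => δ n (m + 1))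
    (hA4' : SuccSeq (fun n => δ n M) fun n => lam n (K + 1))
    (U : ℕ → ℕ → ℕ → ℝ)
    (hUon : ∀ n, ∀ i ∈ Finset.Icc 1 (d n), ∀ j ∈ Finset.Icc 1 (d n),
      ∑ a ∈ Finset.Icc 1 (d n), U n i a * U n j a = if i = j then (1 : ℝ) else 0)
    (X : ℕ → ℕ → Ω → ℕ → ℝ)
    (hX : ∀ n j ω a, X n j ω a = ∑ i ∈ Finset.Icc 1 (d n), y n i j ω * U n i a)
    (Sighat : ℕ → Ω → ℕ → ℕ → ℝ)
    (hSighat : ∀ n ω a b, Sighat n ω a b =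
      (n : ℝ)⁻¹ * ∑ j ∈ Finset.Icc 1 n, X n j ω a * X n j ω b)
    (lamhat : ℕ → ℕ → Ω → ℝ)
    (Uhat : ℕ → ℕ → Ω → ℕ → ℝ)
    (hUhatOn : ∀ n ω, ∀ i ∈ Finset.Icc 1 (d n), ∀ j ∈ Finset.Icc 1 (d n),
      ∑ a ∈ Finset.Icc 1 (d n), Uhat n i ω a * Uhat n j ω a = if i = j then (1 : ℝ) else 0)
    (heig : ∀ n ω, ∀ i ∈ Finset.Icc 1 (d n), ∀ a ∈ Finset.Icc 1 (d n),
      ∑ b ∈ Finset.Icc 1 (d n), Sighat n ω a b * Uhat n i ω b = lamhat n i ω * Uhat n i ω a)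
    (hdesc : ∀ n ω i j, 1 ≤ i → i ≤ j → j ≤ d n → lamhat n j ω ≤ lamhat n i ω)
    (hout : ∀ k, 1 ≤ k → k ≤ K → 0 < w k →
      Tendsto (fun n => τ1 n k / τ2 n k) atTop (nhds 0)) :
    ∀ k, 1 ≤ k → k ≤ K →
      (∀ᵐ ω ∂ℙ, Tendsto (fun n =>
        (∑ a ∈ Finset.Icc 1 (d n), ∑ b ∈ Finset.Icc 1 (d n),
          U n k a * Sighat n ω a b * U n k b) / lam n k) atTop (nhds 1)) ∧
      (∀ᵐ ω ∂ℙ, Tendsto (fun n =>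
        (∑ j ∈ Finset.Icc 1 n, (y n k j ω) ^ 2) / ((n : ℝ) * lam n k)) atTop (nhds 1)) ∧
      (∀ᵐ ω ∂ℙ, Tendsto (fun n =>
        (∑ i ∈ Finset.Icc 1 (d n), lamhat n i ω *
          (∑ a ∈ Finset.Icc 1 (d n), U n k a * Uhat n i ω a) ^ 2) / lam n k)
        atTop (nhds 1)) := by
  intro k hk1 hkK
  classical
  -- measurability helpers
  have hms : ∀ p : ℕ × ℕ, MeasurableSet {ω | B p ω = true} :=
    fun p => (hBmeas p) (measurableSet_singleton true)
  have hindmeas : ∀ p : ℕ × ℕ, Measurable (fun ω => if B p ω then (1:ℝ) else 0) :=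
    fun p => Measurable.ite (hms p) measurable_const measurable_const
  have hz2int : ∀ p, Integrable (fun ω => z p ω ^ 2) ℙ := by
    intro p
    have h41 : Integrable (fun ω => z p ω ^ 4 + 1) ℙ := (hmom4 p).add (integrable_const 1)
    refine h41.mono' (((hzmeas p).pow_const 2).aestronglyMeasurable) (ae_of_all _ fun ω => ?_)
    rw [Real.norm_eq_abs, abs_of_nonneg (sq_nonneg _)]
    nlinarith [sq_nonneg (z p ω), sq_nonneg (z p ω ^ 2 - 1)]
  have hIndZ : IndepFun (fun ω => if B (k,1) ω then (1:ℝ) else 0) (fun ω => z (k,1) ω ^ 2) ℙ := by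
    have h := hindep.indepFun
      (show (Sum.inr (k,1) : (ℕ×ℕ) ⊕ (ℕ×ℕ)) ≠ Sum.inl (k,1) by simp)
    exact h.comp measurable_id (measurable_id.pow_const 2)
  have hEind : (∫ ω, (if B (k,1) ω then (1:ℝ) else 0)) = w k := by
    have hrw : (fun ω => if B (k,1) ω then (1:ℝ) else 0)
        = Set.indicator {ω | B (k,1) ω = true} (fun _ => (1:ℝ)) := by
      ext ω; by_cases h : B (k,1) ω <;> simp [h, Set.indicator_apply]
    rw [hrw, integral_indicator_const (1:ℝ) (hms (k,1)), smul_eq_mul, mul_one, measureReal_def, hBer k 1]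
  have hE1 : (∫ ω, (if B (k,1) ω then (1:ℝ) else 0) * z (k,1) ω ^ 2) = w k := by
    rw [hIndZ.integral_fun_mul_eq_mul_integral (hindmeas (k,1)).aestronglyMeasurable
      (((hzmeas (k,1)).pow_const 2).aestronglyMeasurable), hEind, hvar (k,1), mul_one]
  have hprodint : Integrable (fun ω => (if B (k,1) ω then (1:ℝ) else 0) * z (k,1) ω ^ 2) ℙ := by
    refine (hz2int (k,1)).mono'
      ((hindmeas (k,1)).mul ((hzmeas (k,1)).pow_const 2)).aestronglyMeasurable
      (ae_of_all _ fun ω => ?_)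
    rw [Real.norm_eq_abs]
    by_cases h : B (k,1) ω <;> simp [h, abs_of_nonneg (sq_nonneg (z (k,1) ω)), sq_nonneg (z (k,1) ω)]
  have hE0 : (∫ ω, (1 - (if B (k,1) ω then (1:ℝ) else 0)) * z (k,1) ω ^ 2) = 1 - w k := by
    have hfun : (fun ω => (1 - (if B (k,1) ω then (1:ℝ) else 0)) * z (k,1) ω ^ 2)
        = fun ω => z (k,1) ω ^ 2 - (if B (k,1) ω then (1:ℝ) else 0) * z (k,1) ω ^ 2 := by
      funext ω; ring
    rw [hfun, integral_sub (hz2int (k,1)) hprodint, hvar (k,1), hE1]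
  -- SLLN applications
  have hS1 := aux_slln z B hzmeas hBmeas hindep hident hmom4 (w k) k (fun j => hBer k j)
    (fun p => p.2 * p.1 ^ 2) (by fun_prop)
    (fun v b hb => by rcases hb with h | h <;> simp [h, abs_of_nonneg (sq_nonneg v), sq_nonneg v])
    (w k) hE1
  have hS0 := aux_slln z B hzmeas hBmeas hindep hident hmom4 (w k) k (fun j => hBer k j)
    (fun p => (1 - p.2) * p.1 ^ 2) (by fun_prop)
    (fun v b hb => by rcases hb with h | h <;> simp [h, abs_of_nonneg (sq_nonneg v), sq_nonneg v])
    (1 - w k) hE0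
  have hS1' : ∀ᵐ ω ∂ℙ, Tendsto (fun n : ℕ =>
      (∑ j ∈ Finset.range n, (if B (k, j+1) ω then (1:ℝ) else 0) * z (k, j+1) ω ^ 2) / n)
      atTop (nhds (w k)) := hS1
  have hS0' : ∀ᵐ ω ∂ℙ, Tendsto (fun n : ℕ =>
      (∑ j ∈ Finset.range n, ((1:ℝ) - (if B (k, j+1) ω then (1:ℝ) else 0)) * z (k, j+1) ω ^ 2) / n)
      atTop (nhds (1 - w k)) := hS0
  -- reindexing Icc 1 n to range n
  have hshift : ∀ (h : ℕ → ℝ) (n : ℕ),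
      ∑ j ∈ Finset.Icc 1 n, h j = ∑ j ∈ Finset.range n, h (j+1) := by
    intro h n
    rw [← Finset.Ico_add_one_right_eq_Icc, Finset.sum_Ico_eq_sum_range]
    exact Finset.sum_congr (by norm_num) fun j _ => by rw [Nat.add_comm]
  -- decomposition of the y-sum
  have hydecomp : ∀ n (ω : Ω), ∑ j ∈ Finset.Icc 1 n, y n k j ω ^ 2
      = τ2 n k * (∑ j ∈ Finset.range n, (if B (k, j+1) ω then (1:ℝ) else 0) * z (k, j+1) ω ^ 2)
      + τ1 n k * (∑ j ∈ Finset.range n,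
          (1 - (if B (k, j+1) ω then (1:ℝ) else 0)) * z (k, j+1) ω ^ 2) := by
    intro n ω
    rw [hshift (fun j => y n k j ω ^ 2) n, Finset.mul_sum, Finset.mul_sum,
      ← Finset.sum_add_distrib]
    refine Finset.sum_congr rfl fun j _ => ?_
    rw [hy]
    cases hb : B (k, j+1) ω
    · simp only [hb, Bool.false_eq_true, if_false]
      rw [mul_pow, Real.sq_sqrt (hτ1 n k).le]; ring
    · simp only [hb, if_true]
      rw [mul_pow, Real.sq_sqrt (hτ2 n k).le]; ring
  -- Statement 2
  have hP2 : ∀ᵐ ω ∂ℙ, Tendsto (fun n =>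
      (∑ j ∈ Finset.Icc 1 n, (y n k j ω) ^ 2) / ((n : ℝ) * lam n k)) atTop (nhds 1) := by
    by_cases hw0 : w k = 0
    · have hBzero : ∀ᵐ ω ∂ℙ, ∀ j : ℕ, B (k, j) ω = false := by
        rw [ae_all_iff]
        intro j
        have h0 : ℙ {ω | B (k, j) ω = true} = 0 := by
          have hb := hBer k j
          rw [hw0] at hb
          exact ((ENNReal.toReal_eq_zero_iff _).mp hb).resolve_right (measure_ne_top _ _)
        have hset : {ω | ¬ B (k, j) ω = false} = {ω | B (k, j) ω = true} := by
          ext ω; simp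
        rw [ae_iff, hset]; exact h0
      filter_upwards [hS0', hBzero] with ω hω hB0
      rw [hw0, sub_zero] at hω
      refine hω.congr fun n => ?_
      have hl : lam n k = τ1 n k := by rw [hlam]; simp [hw0]
      have hsum : ∑ j ∈ Finset.Icc 1 n, y n k j ω ^ 2
          = τ1 n k * ∑ j ∈ Finset.range n,
              (1 - (if B (k, j+1) ω then (1:ℝ) else 0)) * z (k, j+1) ω ^ 2 := by
        rw [hydecomp n ω]
        have hz0 : ∑ j ∈ Finset.range n,
            (if B (k, j+1) ω then (1:ℝ) else 0) * z (k, j+1) ω ^ 2 = 0 := by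
          refine Finset.sum_eq_zero fun j _ => ?_
          rw [hB0 (j+1)]; simp
        rw [hz0, mul_zero, zero_add]
      rw [hsum, hl, mul_comm ((n:ℝ)) (τ1 n k), mul_div_mul_left _ _ (hτ1 n k).ne']
    · have hwpos : 0 < w k := lt_of_le_of_ne (hw01 k).1 (Ne.symm hw0)
      filter_upwards [hS1', hS0'] with ω h1 h0
      have hτ := hout k hk1 hkK hwpos
      have hlim : Tendsto (fun n : ℕ =>
          ((∑ j ∈ Finset.range n, (if B (k, j+1) ω then (1:ℝ) else 0) * z (k, j+1) ω ^ 2) / n) / w k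
          + (τ1 n k / τ2 n k) *
            (((∑ j ∈ Finset.range n,
              (1 - (if B (k, j+1) ω then (1:ℝ) else 0)) * z (k, j+1) ω ^ 2) / n) / w k))
          atTop (nhds (w k / w k + 0 * ((1 - w k) / w k))) :=
        (h1.div_const _).add (hτ.mul (h0.div_const _))
      have hone : w k / w k + 0 * ((1 - w k) / w k) = 1 := by field_simp; ring
      rw [hone] at hlim
      refine Tendsto.congr' ?_ hlim
      filter_upwards [eventually_ge_atTop 1] with n hn
      have hl : lam n k = w k * τ2 n k := by rw [hlam, if_neg hw0]
      rw [hydecomp n ω, hl]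
      have hn0 : (n:ℝ) ≠ 0 := Nat.cast_ne_zero.mpr (by omega)
      field_simp [hn0, hw0, (hτ2 n k).ne']
  -- Statement 1
  have hP1 : ∀ᵐ ω ∂ℙ, Tendsto (fun n =>
      (∑ a ∈ Finset.Icc 1 (d n), ∑ b ∈ Finset.Icc 1 (d n),
        U n k a * Sighat n ω a b * U n k b) / lam n k) atTop (nhds 1) := by
    have hdK : ∀ᶠ n in atTop, K ≤ d n := hd.eventually_ge_atTop K
    filter_upwards [hP2] with ω hω
    refine Tendsto.congr' ?_ hω
    filter_upwards [hdK] with n hdn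
    have hkmem : k ∈ Finset.Icc 1 (d n) := Finset.mem_Icc.mpr ⟨hk1, le_trans hkK hdn⟩
    have hXU : ∀ j, ∑ a ∈ Finset.Icc 1 (d n), U n k a * X n j ω a = y n k j ω := by
      intro j
      have h1 : ∀ a, U n k a * X n j ω a
          = ∑ i ∈ Finset.Icc 1 (d n), y n i j ω * (U n i a * U n k a) := by
        intro a
        rw [hX n j ω a, Finset.mul_sum]
        exact Finset.sum_congr rfl fun i _ => by ring
      simp only [h1]
      rw [Finset.sum_comm]
      have h2 : ∀ i ∈ Finset.Icc 1 (d n),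
          ∑ a ∈ Finset.Icc 1 (d n), y n i j ω * (U n i a * U n k a)
          = if i = k then y n i j ω else 0 := by
        intro i hi
        rw [← Finset.mul_sum, hUon n i hi k hkmem]
        by_cases h : i = k <;> simp [h]
      rw [Finset.sum_congr rfl h2,
        Finset.sum_ite_eq' (Finset.Icc 1 (d n)) k (fun i => y n i j ω), if_pos hkmem]
    have expand : ∀ a b, U n k a * Sighat n ω a b * U n k b
        = ∑ j ∈ Finset.Icc 1 n,
            (n:ℝ)⁻¹ * ((U n k a * X n j ω a) * (U n k b * X n j ω b)) := by
      intro a b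
      rw [hSighat n ω a b]
      calc U n k a * ((n:ℝ)⁻¹ * ∑ j ∈ Finset.Icc 1 n, X n j ω a * X n j ω b) * U n k b
          = (n:ℝ)⁻¹ * ((U n k a * U n k b) * ∑ j ∈ Finset.Icc 1 n, X n j ω a * X n j ω b) := by
            ring
        _ = (n:ℝ)⁻¹ * ∑ j ∈ Finset.Icc 1 n, (U n k a * U n k b) * (X n j ω a * X n j ω b) := by
            rw [Finset.mul_sum]
        _ = ∑ j ∈ Finset.Icc 1 n,
              (n:ℝ)⁻¹ * ((U n k a * U n k b) * (X n j ω a * X n j ω b)) := by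
            rw [Finset.mul_sum]
        _ = ∑ j ∈ Finset.Icc 1 n,
              (n:ℝ)⁻¹ * ((U n k a * X n j ω a) * (U n k b * X n j ω b)) := by
            exact Finset.sum_congr rfl fun j _ => by ring
    have hquad : (∑ a ∈ Finset.Icc 1 (d n), ∑ b ∈ Finset.Icc 1 (d n),
        U n k a * Sighat n ω a b * U n k b)
        = (∑ j ∈ Finset.Icc 1 n, y n k j ω ^ 2) * (n:ℝ)⁻¹ := by
      calc (∑ a ∈ Finset.Icc 1 (d n), ∑ b ∈ Finset.Icc 1 (d n),
          U n k a * Sighat n ω a b * U n k b)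
          = ∑ a ∈ Finset.Icc 1 (d n), ∑ b ∈ Finset.Icc 1 (d n), ∑ j ∈ Finset.Icc 1 n,
              (n:ℝ)⁻¹ * ((U n k a * X n j ω a) * (U n k b * X n j ω b)) :=
            Finset.sum_congr rfl fun a _ => Finset.sum_congr rfl fun b _ => expand a b
        _ = ∑ a ∈ Finset.Icc 1 (d n), ∑ j ∈ Finset.Icc 1 n, ∑ b ∈ Finset.Icc 1 (d n),
              (n:ℝ)⁻¹ * ((U n k a * X n j ω a) * (U n k b * X n j ω b)) :=
            Finset.sum_congr rfl fun a _ => Finset.sum_comm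
        _ = ∑ j ∈ Finset.Icc 1 n, ∑ a ∈ Finset.Icc 1 (d n), ∑ b ∈ Finset.Icc 1 (d n),
              (n:ℝ)⁻¹ * ((U n k a * X n j ω a) * (U n k b * X n j ω b)) :=
            Finset.sum_comm
        _ = ∑ j ∈ Finset.Icc 1 n, (n:ℝ)⁻¹ *
              ((∑ a ∈ Finset.Icc 1 (d n), U n k a * X n j ω a)
                * (∑ b ∈ Finset.Icc 1 (d n), U n k b * X n j ω b)) := by
            refine Finset.sum_congr rfl fun j _ => ?_
            rw [Finset.sum_mul_sum, Finset.mul_sum]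
            exact Finset.sum_congr rfl fun a _ => by rw [Finset.mul_sum]
        _ = ∑ j ∈ Finset.Icc 1 n, (n:ℝ)⁻¹ * (y n k j ω * y n k j ω) := by
            refine Finset.sum_congr rfl fun j _ => ?_
            rw [hXU j]
        _ = (∑ j ∈ Finset.Icc 1 n, y n k j ω ^ 2) * (n:ℝ)⁻¹ := by
            rw [Finset.sum_mul]
            exact Finset.sum_congr rfl fun j _ => by ring
    rw [hquad, ← div_eq_mul_inv, div_div]
  -- completeness of the eigenvector system
  have complete : ∀ n (ω : Ω), ∀ b ∈ Finset.Icc 1 (d n), ∀ c ∈ Finset.Icc 1 (d n),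
      ∑ i ∈ Finset.Icc 1 (d n), Uhat n i ω b * Uhat n i ω c = if b = c then (1:ℝ) else 0 := by
    intro n ω b hb c hc
    set s := Finset.Icc 1 (d n) with hs
    let V : Matrix s s ℝ := Matrix.of fun i a => Uhat n (i:ℕ) ω (a:ℕ)
    have hV : V * V.transpose = 1 := by
      ext i j
      rw [Matrix.mul_apply]
      simp only [Matrix.transpose_apply, Matrix.one_apply, V, Matrix.of_apply]
      rw [Finset.sum_coe_sort s (fun a => Uhat n (i:ℕ) ω a * Uhat n (j:ℕ) ω a),
        hUhatOn n ω (i:ℕ) i.2 (j:ℕ) j.2]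
      by_cases h : i = j
      · simp [h]
      · rw [if_neg (fun hc' => h (Subtype.ext hc')), if_neg h]
    have hV' : V.transpose * V = 1 := mul_eq_one_comm.mp hV
    have h2 : (V.transpose * V) ⟨b, hb⟩ ⟨c, hc⟩ = (1 : Matrix s s ℝ) ⟨b, hb⟩ ⟨c, hc⟩ := by rw [hV']
    rw [Matrix.mul_apply] at h2
    simp only [Matrix.transpose_apply, Matrix.one_apply, V, Matrix.of_apply] at h2
    rw [Finset.sum_coe_sort s (fun i => Uhat n i ω b * Uhat n i ω c)] at h2
    rw [h2]
    by_cases h : b = c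
    · simp [h]
    · rw [if_neg (fun hc' : (⟨b, hb⟩ : s) = ⟨c, hc⟩ => h (congrArg Subtype.val hc')), if_neg h]
  -- Statement 3 equals Statement 1 pointwise
  have key3 : ∀ n (ω : Ω),
      (∑ i ∈ Finset.Icc 1 (d n), lamhat n i ω *
          (∑ a ∈ Finset.Icc 1 (d n), U n k a * Uhat n i ω a) ^ 2)
        = ∑ a ∈ Finset.Icc 1 (d n), ∑ b ∈ Finset.Icc 1 (d n),
            U n k a * Sighat n ω a b * U n k b := by
    intro n ω
    have step1 : ∀ i ∈ Finset.Icc 1 (d n), lamhat n i ω *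
        (∑ a ∈ Finset.Icc 1 (d n), U n k a * Uhat n i ω a) ^ 2
        = ∑ a ∈ Finset.Icc 1 (d n), ∑ b ∈ Finset.Icc 1 (d n), ∑ c ∈ Finset.Icc 1 (d n),
            U n k a * Sighat n ω a b * (Uhat n i ω b * Uhat n i ω c * U n k c) := by
      intro i hi
      have e0 : ∑ a ∈ Finset.Icc 1 (d n), U n k a * (lamhat n i ω * Uhat n i ω a)
          = lamhat n i ω * ∑ a ∈ Finset.Icc 1 (d n), U n k a * Uhat n i ω a := by
        rw [Finset.mul_sum]; exact Finset.sum_congr rfl fun a _ => by ring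
      have e1 : ∑ a ∈ Finset.Icc 1 (d n), U n k a * (lamhat n i ω * Uhat n i ω a)
          = ∑ a ∈ Finset.Icc 1 (d n), ∑ b ∈ Finset.Icc 1 (d n),
              U n k a * (Sighat n ω a b * Uhat n i ω b) := by
        refine Finset.sum_congr rfl fun a ha => ?_
        rw [← heig n ω i hi a ha, Finset.mul_sum]
      calc lamhat n i ω * (∑ a ∈ Finset.Icc 1 (d n), U n k a * Uhat n i ω a) ^ 2
          = (∑ a ∈ Finset.Icc 1 (d n), U n k a * (lamhat n i ω * Uhat n i ω a))
            * (∑ c ∈ Finset.Icc 1 (d n), U n k c * Uhat n i ω c) := by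
            rw [e0]; ring
        _ = (∑ a ∈ Finset.Icc 1 (d n), ∑ b ∈ Finset.Icc 1 (d n),
              U n k a * (Sighat n ω a b * Uhat n i ω b))
            * (∑ c ∈ Finset.Icc 1 (d n), U n k c * Uhat n i ω c) := by rw [e1]
        _ = ∑ a ∈ Finset.Icc 1 (d n), ∑ b ∈ Finset.Icc 1 (d n), ∑ c ∈ Finset.Icc 1 (d n),
              U n k a * Sighat n ω a b * (Uhat n i ω b * Uhat n i ω c * U n k c) := by
            rw [Finset.sum_mul]
            refine Finset.sum_congr rfl fun a _ => ?_
            rw [Finset.sum_mul]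
            refine Finset.sum_congr rfl fun b _ => ?_
            rw [Finset.mul_sum]
            exact Finset.sum_congr rfl fun c _ => by ring
    rw [Finset.sum_congr rfl step1, Finset.sum_comm]
    refine Finset.sum_congr rfl fun a ha => ?_
    rw [Finset.sum_comm]
    refine Finset.sum_congr rfl fun b hb => ?_
    rw [Finset.sum_comm]
    have hcoll : ∀ c ∈ Finset.Icc 1 (d n),
        ∑ i ∈ Finset.Icc 1 (d n),
          U n k a * Sighat n ω a b * (Uhat n i ω b * Uhat n i ω c * U n k c)
        = if b = c then U n k a * Sighat n ω a b * U n k c else 0 := by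
      intro c hcmem
      have hpull : ∑ i ∈ Finset.Icc 1 (d n),
          U n k a * Sighat n ω a b * (Uhat n i ω b * Uhat n i ω c * U n k c)
          = (U n k a * Sighat n ω a b * U n k c)
            * ∑ i ∈ Finset.Icc 1 (d n), Uhat n i ω b * Uhat n i ω c := by
        rw [Finset.mul_sum]; exact Finset.sum_congr rfl fun i _ => by ring
      rw [hpull, complete n ω b hb c hcmem]
      by_cases h : b = c <;> simp [h]
    rw [Finset.sum_congr rfl hcoll,
      Finset.sum_ite_eq (Finset.Icc 1 (d n)) b
        (fun c => U n k a * Sighat n ω a b * U n k c), if_pos hb]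
  refine ⟨hP1, hP2, ?_⟩
  filter_upwards [hP1] with ω hω
  refine hω.congr fun n => ?_
  rw [key3 n ω]
end

section
/- (Distance between a high-dimensional outlier and an inlier with a positive fraction of outlier components.) In the high-dimensional geometric setting, assume K^{(d)}/d → p ∈ (0,1] as d → ∞ and τ^{(d)} → τ ∈ (0,∞). Then (1/d) ‖X^{(d)} − X'^{(d)}‖² → p(τ − σ²) + 2σ² almost surely as d → ∞. -/
open MeasureTheory ProbabilityTheory Filter Finset Asymptotics ENNReal

open Real


lemma pdf_eq (x : ℝ) : gaussianPDFReal 0 1 x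
    = (Real.sqrt (2 * π))⁻¹ * Real.exp (-(1/2) * x ^ 2) := by
  simp only [gaussianPDFReal, NNReal.coe_one, mul_one, sub_zero]
  congr 1
  ring_nf

lemma gr_eq : gaussianReal 0 1
    = (volume : Measure ℝ).withDensity (fun x => ((gaussianPDFReal 0 1 x).toNNReal : ENNReal)) := by
  rw [gaussianReal_of_var_ne_zero 0 one_ne_zero]
  rfl

lemma meas_pdf : Measurable (fun x => (gaussianPDFReal 0 1 x).toNNReal) :=
  measurable_real_toNNReal.comp (measurable_gaussianPDFReal 0 1)

lemma integral_gr (g : ℝ → ℝ) :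
    ∫ x, g x ∂(gaussianReal 0 1) = ∫ x, gaussianPDFReal 0 1 x * g x := by
  rw [gr_eq, integral_withDensity_eq_integral_smul meas_pdf]
  refine integral_congr_ae (Filter.Eventually.of_forall fun x => ?_)
  simp [NNReal.smul_def, Real.coe_toNNReal _ (gaussianPDFReal_nonneg 0 1 x)]

lemma integrable_gr_iff (g : ℝ → ℝ) :
    Integrable g (gaussianReal 0 1) ↔ Integrable (fun x => gaussianPDFReal 0 1 x * g x) := by
  rw [gr_eq, integrable_withDensity_iff_integrable_smul meas_pdf]
  constructor <;> intro h <;> refine h.congr (Filter.Eventually.of_forall fun x => ?_) <;>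
    simp [NNReal.smul_def, Real.coe_toNNReal _ (gaussianPDFReal_nonneg 0 1 x)]

lemma integrable_sq_exp : Integrable (fun x : ℝ => x ^ 2 * rexp (-(1/2) * x ^ 2)) := by
  have h := integrable_rpow_mul_exp_neg_mul_sq (b := 1/2) (by norm_num) (s := 2) (by norm_num)
  refine h.congr (Filter.Eventually.of_forall fun x => ?_)
  norm_cast

lemma integrable_id_exp : Integrable (fun x : ℝ => x * rexp (-(1/2) * x ^ 2)) := by
  have h := integrable_rpow_mul_exp_neg_mul_sq (b := 1/2) (by norm_num) (s := 1) (by norm_num)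
  refine h.congr (Filter.Eventually.of_forall fun x => ?_)
  norm_cast
  simp

lemma integral_sq_exp : ∫ x : ℝ, x ^ 2 * rexp (-(1/2) * x ^ 2) = Real.sqrt (2 * π) := by
  have heven : ∀ x : ℝ, (-x) ^ 2 * rexp (-(1/2) * (-x) ^ 2) = x ^ 2 * rexp (-(1/2) * x ^ 2) := by
    intro x; ring_nf
  have hIoi : ∫ x in Set.Ioi (0:ℝ), x ^ 2 * rexp (-(1/2) * x ^ 2) = Real.sqrt (2 * π) / 2 := by
    have h := integral_rpow_mul_exp_neg_mul_rpow (p := 2) (q := 2) (b := 1/2)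
      (by norm_num) (by norm_num) (by norm_num)
    have h2 : ∀ x : ℝ, x ^ (2:ℝ) = x ^ (2:ℕ) := fun x => by norm_cast
    simp_rw [h2] at h
    rw [h]
    have hΓ : Real.Gamma ((2 + 1) / 2) = Real.sqrt π / 2 := by
      rw [show ((2:ℝ) + 1) / 2 = 1/2 + 1 by norm_num, Real.Gamma_add_one (by norm_num),
        Real.Gamma_one_half_eq]
      ring
    rw [hΓ]
    have hb : ((1:ℝ)/2) ^ (-((2:ℝ) + 1) / 2) = Real.sqrt 8 := by
      have e1 : ((1:ℝ)/2) ^ (-((2:ℝ) + 1) / 2) = (2:ℝ) ^ ((3:ℝ)/2) := by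
        rw [show (-((2:ℝ) + 1) / 2) = -((3:ℝ)/2) by norm_num, one_div,
          Real.inv_rpow (by norm_num : (0:ℝ) ≤ 2),
          ← Real.rpow_neg (by norm_num : (0:ℝ) ≤ 2), neg_neg]
      have h8 : (2:ℝ) ^ (3:ℝ) = 8 := by
        rw [show (3:ℝ) = ((3:ℕ):ℝ) from by norm_cast, Real.rpow_natCast]; norm_num
      rw [e1, show ((3:ℝ)/2) = 3 * (1/2 : ℝ) by norm_num,
        Real.rpow_mul (by norm_num : (0:ℝ) ≤ 2), h8, ← Real.sqrt_eq_rpow]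
    rw [hb]
    rw [show Real.sqrt 8 = 2 * Real.sqrt 2 by
      rw [show (8:ℝ) = 2^2 * 2 by norm_num, Real.sqrt_mul (by positivity), Real.sqrt_sq (by norm_num)]]
    rw [Real.sqrt_mul (by norm_num : (0:ℝ) ≤ 2)]
    ring
  have hIic : ∫ x in Set.Iic (0:ℝ), x ^ 2 * rexp (-(1/2) * x ^ 2) = Real.sqrt (2 * π) / 2 := by
    have h := integral_comp_neg_Ioi (0:ℝ) (fun x => x ^ 2 * rexp (-(1/2) * x ^ 2))
    rw [neg_zero] at h
    rw [← h]
    simp_rw [heven]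
    exact hIoi
  rw [← intervalIntegral.integral_Iic_add_Ioi (integrable_sq_exp.integrableOn)
    (integrable_sq_exp.integrableOn), hIic, hIoi]
  ring

lemma integral_id_exp : ∫ x : ℝ, x * rexp (-(1/2) * x ^ 2) = 0 := by
  have h := integral_neg_eq_self (fun x : ℝ => x * rexp (-(1/2) * x ^ 2)) volume
  have h2 : ∫ x : ℝ, (-x) * rexp (-(1/2) * (-x) ^ 2) = - ∫ x : ℝ, x * rexp (-(1/2) * x ^ 2) := by
    rw [← integral_neg]
    refine integral_congr_ae (Filter.Eventually.of_forall fun x => ?_)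
    ring_nf
  rw [h2] at h
  linarith

lemma integral_sq_gaussian : ∫ x, x ^ 2 ∂(gaussianReal 0 1) = 1 := by
  rw [integral_gr]
  simp_rw [pdf_eq, mul_assoc]
  rw [integral_const_mul]
  simp_rw [show ∀ x : ℝ, rexp (-(1/2) * x^2) * x^2 = x^2 * rexp (-(1/2) * x^2) from fun x => by ring]
  rw [integral_sq_exp, inv_mul_cancel₀ (by positivity)]

lemma integral_id_gaussian : ∫ x, x ∂(gaussianReal 0 1) = 0 := by
  rw [integral_gr]
  simp_rw [pdf_eq, mul_assoc]
  rw [integral_const_mul]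
  simp_rw [show ∀ x : ℝ, rexp (-(1/2) * x^2) * x = x * rexp (-(1/2) * x^2) from fun x => by ring]
  rw [integral_id_exp, mul_zero]

lemma integrable_sq_gaussian : Integrable (fun x : ℝ => x ^ 2) (gaussianReal 0 1) := by
  rw [integrable_gr_iff]
  simp_rw [pdf_eq, mul_assoc]
  apply Integrable.const_mul
  simp_rw [show ∀ x : ℝ, rexp (-(1/2) * x^2) * x^2 = x^2 * rexp (-(1/2) * x^2) from fun x => by ring]
  exact integrable_sq_exp

lemma integrable_id_gaussian : Integrable (fun x : ℝ => x) (gaussianReal 0 1) := by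
  rw [integrable_gr_iff]
  simp_rw [pdf_eq, mul_assoc]
  apply Integrable.const_mul
  simp_rw [show ∀ x : ℝ, rexp (-(1/2) * x^2) * x = x * rexp (-(1/2) * x^2) from fun x => by ring]
  exact integrable_id_exp


def enumList (J : ℕ → Finset ℕ) : ℕ → List ℕ
  | 0 => (J 0).sort (· ≤ ·)
  | (m+1) => enumList J m ++ ((J (m+1)) \ (J m)).sort (· ≤ ·)

lemma enumList_toFinset {J : ℕ → Finset ℕ} (hmono : ∀ m, J m ⊆ J (m+1)) :
    ∀ m, (enumList J m).toFinset = J m := by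
  intro m
  induction m with
  | zero => simp [enumList]
  | succ n ih =>
    rw [enumList, List.toFinset_append, ih, Finset.sort_toFinset,
      Finset.union_sdiff_of_subset (hmono n)]

lemma enumList_nodup {J : ℕ → Finset ℕ} (hmono : ∀ m, J m ⊆ J (m+1)) :
    ∀ m, (enumList J m).Nodup := by
  intro m
  induction m with
  | zero => exact (J 0).sort_nodup _
  | succ n ih =>
    rw [enumList, List.nodup_append]
    refine ⟨ih, (J (n+1) \ J n).sort_nodup _, fun a ha b ha' => ?_⟩
    rw [← List.mem_toFinset, enumList_toFinset hmono] at ha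
    rw [Finset.mem_sort] at ha'
    exact fun hab => (Finset.mem_sdiff.mp ha').2 (hab ▸ ha)

lemma enumList_length {J : ℕ → Finset ℕ} (hmono : ∀ m, J m ⊆ J (m+1)) (m : ℕ) :
    (enumList J m).length = (J m).card := by
  rw [← enumList_toFinset hmono m, List.toFinset_card_of_nodup (enumList_nodup hmono m)]

lemma enumList_prefix {J : ℕ → Finset ℕ} {a b : ℕ} (hab : a ≤ b) :
    enumList J a <+: enumList J b := by
  induction b with
  | zero => rw [Nat.le_zero.mp hab]
  | succ n ih =>
    rcases Nat.lt_or_ge a (n+1) with h | h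
    · exact (ih (Nat.lt_succ_iff.mp h)).trans ⟨_, rfl⟩
    · rw [Nat.le_antisymm hab h]

lemma enumList_getD_eq {J : ℕ → Finset ℕ} (hmono : ∀ m, J m ⊆ J (m+1)) {a b k : ℕ}
    (ha : k < (J a).card) (hb : k < (J b).card) :
    (enumList J a).getD k 0 = (enumList J b).getD k 0 := by
  rcases le_total a b with h | h
  · obtain ⟨s, hs⟩ := enumList_prefix (J := J) h
    rw [← hs, List.getD_append _ _ _ _ (by rw [enumList_length hmono]; exact ha)]
  · obtain ⟨s, hs⟩ := enumList_prefix (J := J) h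
    rw [← hs, List.getD_append _ _ _ _ (by rw [enumList_length hmono]; exact hb)]

theorem slln_subset {Ω : Type} [MeasureSpace Ω] [IsProbabilityMeasure (ℙ : Measure Ω)]
    (Y : ℕ → Ω → ℝ)
    (hint : Integrable (Y 0) ℙ)
    (hindep : Pairwise fun i j => IndepFun (Y i) (Y j) ℙ)
    (hident : ∀ i j, IdentDistrib (Y i) (Y j) ℙ ℙ)
    (J : ℕ → Finset ℕ) (hmono : ∀ m, J m ⊆ J (m+1))
    (p : ℝ) (hp : 0 < p)
    (hcard : Tendsto (fun m => ((J m).card : ℝ) / m) atTop (nhds p)) :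
    ∀ᵐ ω ∂ℙ, Tendsto (fun m => (∑ i ∈ J m, Y i ω) / m) atTop
      (nhds (p * ∫ a, Y 0 a)) := by
  have hcardtop : Tendsto (fun m => (J m).card) atTop atTop := by
    rw [← tendsto_natCast_atTop_iff (R := ℝ)]
    have h1 : Tendsto (fun m : ℕ => (((J m).card : ℝ) / m) * m) atTop atTop :=
      Tendsto.pos_mul_atTop hp hcard tendsto_natCast_atTop_atTop
    refine h1.congr' ?_
    filter_upwards [eventually_gt_atTop 0] with m hm
    field_simp
  have hex : ∀ k : ℕ, ∃ m, k < (J m).card := fun k =>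
    (hcardtop.eventually (eventually_gt_atTop k)).exists
  set φ : ℕ → ℕ := fun k => (enumList J (Nat.find (hex k))).getD k 0 with hφ
  have hφeq : ∀ {m k : ℕ}, k < (J m).card → (enumList J m).getD k 0 = φ k := by
    intro m k hk
    exact enumList_getD_eq hmono hk (Nat.find_spec (hex k))
  have hφinj : Function.Injective φ := by
    intro k l hkl
    obtain ⟨m, hm⟩ := hex (max k l)
    have hk : k < (J m).card := (le_max_left k l).trans_lt hm
    have hl : l < (J m).card := (le_max_right k l).trans_lt hm
    have hk' : k < (enumList J m).length := by rw [enumList_length hmono]; exact hk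
    have hl' : l < (enumList J m).length := by rw [enumList_length hmono]; exact hl
    rw [← hφeq hk, ← hφeq hl, List.getD_eq_getElem _ _ hk', List.getD_eq_getElem _ _ hl'] at hkl
    have h2 : (enumList J m).get ⟨k, hk'⟩ = (enumList J m).get ⟨l, hl'⟩ := hkl
    have h3 := ((enumList_nodup hmono m).get_inj_iff).mp h2
    simpa using h3
  have hφmem : ∀ {m k : ℕ}, k < (J m).card → φ k ∈ J m := by
    intro m k hk
    have hk' : k < (enumList J m).length := by rw [enumList_length hmono]; exact hk
    rw [← hφeq hk, List.getD_eq_getElem _ _ hk', ← enumList_toFinset hmono m,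
      List.mem_toFinset]
    exact List.getElem_mem _
  have hsum : ∀ m (g : ℕ → ℝ), ∑ i ∈ J m, g i = ∑ k ∈ Finset.range (J m).card, g (φ k) := by
    intro m g
    have hJeq : J m = (Finset.range (J m).card).image φ := by
      apply Finset.ext
      intro a
      simp only [Finset.mem_image, Finset.mem_range]
      constructor
      · intro ha
        rw [← enumList_toFinset hmono m, List.mem_toFinset] at ha
        obtain ⟨⟨k, hk⟩, hka⟩ := List.mem_iff_get.mp ha
        refine ⟨k, by rwa [enumList_length hmono] at hk, ?_⟩
        rw [← hφeq (by rwa [enumList_length hmono] at hk : k < (J m).card),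
          List.getD_eq_getElem _ _ hk]
        exact hka
      · rintro ⟨k, hk, rfl⟩
        exact hφmem hk
    conv_lhs => rw [hJeq]
    exact Finset.sum_image (fun a _ b _ h => hφinj h)
  have hW : ∀ᵐ ω ∂ℙ, Tendsto (fun n : ℕ => (∑ k ∈ Finset.range n, Y (φ k) ω) / n) atTop
      (nhds (∫ a, Y 0 a)) := by
    have h0 : ∫ a, Y (φ 0) a ∂ℙ = ∫ a, Y 0 a ∂ℙ := (hident (φ 0) 0).integral_eq
    have := strong_law_ae_real (fun k => Y (φ k))
      ((hident (φ 0) 0).integrable_iff.mpr hint)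
      (fun k l hkl => hindep (fun h => hkl (hφinj h)))
      (fun k => hident (φ k) (φ 0))
    rw [h0] at this
    exact this
  filter_upwards [hW] with ω hω
  have hcomp : Tendsto (fun m => (∑ k ∈ Finset.range (J m).card, Y (φ k) ω) / ((J m).card : ℝ))
      atTop (nhds (∫ a, Y 0 a)) := hω.comp hcardtop
  have hprod := hcard.mul hcomp
  refine hprod.congr' ?_
  filter_upwards [hcardtop.eventually (eventually_gt_atTop 0)] with m hm
  have hc : ((J m).card : ℝ) ≠ 0 := Nat.cast_ne_zero.mpr hm.ne'
  rw [hsum m (fun i => Y i ω), div_mul_div_comm,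
    mul_comm ((J m).card : ℝ) (∑ k ∈ Finset.range (J m).card, Y (φ k) ω)]
  exact mul_div_mul_right _ _ hc

section helper
variable {Ω : Type} [MeasureSpace Ω]

omit [MeasureSpace Ω] in
lemma gauss_moments [MeasureSpace Ω] {X : Ω → ℝ} (hX : Measurable X)
    (hg : Measure.map X ℙ = gaussianReal 0 1) :
    Integrable X ℙ ∧ (∫ ω, X ω ∂ℙ = 0) ∧ Integrable (fun ω => (X ω)^2) ℙ ∧
      (∫ ω, (X ω)^2 ∂ℙ = 1) := by
  have hsm : AEStronglyMeasurable (fun x : ℝ => x) (Measure.map X ℙ) := by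
    rw [hg]; exact measurable_id.aestronglyMeasurable
  have hsm2 : AEStronglyMeasurable (fun x : ℝ => x^2) (Measure.map X ℙ) := by
    rw [hg]; exact (measurable_id.pow_const 2).aestronglyMeasurable
  refine ⟨?_, ?_, ?_, ?_⟩
  · exact (integrable_map_measure hsm hX.aemeasurable).mp
      (by rw [hg]; exact integrable_id_gaussian)
  · have := integral_map hX.aemeasurable hsm
    rw [hg, integral_id_gaussian] at this
    exact this.symm
  · exact (integrable_map_measure hsm2 hX.aemeasurable).mp
      (by rw [hg]; exact integrable_sq_gaussian)
  · have := integral_map hX.aemeasurable hsm2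
    rw [hg, integral_sq_gaussian] at this
    exact this.symm
end helper

theorem stmt17
    {Ω : Type} [MeasureSpace Ω] [IsProbabilityMeasure (ℙ : Measure Ω)]
    (σ : ℝ) (hσ : 0 < σ)
    (z z' : ℕ → Ω → ℝ)
    (hzmeas : ∀ i, Measurable (z i)) (hzmeas' : ∀ i, Measurable (z' i))
    (hindep : iIndepFun (Sum.elim z z') ℙ)
    (hgauss : ∀ i, Measure.map (z i) ℙ = gaussianReal 0 1)
    (hgauss' : ∀ i, Measure.map (z' i) ℙ = gaussianReal 0 1)
    (Iout : ℕ → Finset ℕ)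
    (hIsub : ∀ m, Iout m ⊆ Finset.Icc 1 m)
    (hInested : ∀ m, Iout m ⊆ Iout (m + 1))
    (τ : ℕ → ℝ) (hτpos : ∀ m, 0 < τ m)
    (p : ℝ) (hp0 : 0 < p) (hp1 : p ≤ 1)
    (hK : Tendsto (fun m => ((Iout m).card : ℝ) / m) atTop (nhds p))
    (t : ℝ) (ht : 0 < t)
    (hτ : Tendsto τ atTop (nhds t)) :
    ∀ᵐ ω ∂ℙ, Tendsto (fun m =>
        (∑ i ∈ Finset.Icc 1 m,
          (σ * z i ω -
            (if i ∈ Iout m then Real.sqrt (τ m) * z' i ω else σ * z' i ω)) ^ 2) / m)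
      atTop (nhds (p * (t - σ ^ 2) + 2 * σ ^ 2)) := by
  have hmeas : ∀ s : ℕ ⊕ ℕ, Measurable (Sum.elim z z' s) := by
    rintro (i | i)
    exacts [hzmeas i, hzmeas' i]
  have hsq : Measurable (fun x : ℝ => x ^ 2) := measurable_id.pow_const 2
  have hmz := fun i => gauss_moments (hzmeas i) (hgauss i)
  have hmz' := fun i => gauss_moments (hzmeas' i) (hgauss' i)
  -- identical distribution facts
  have idz : ∀ i j, IdentDistrib (z i) (z j) ℙ ℙ := fun i j =>
    ⟨(hzmeas i).aemeasurable, (hzmeas j).aemeasurable, by rw [hgauss i, hgauss j]⟩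
  have idz' : ∀ i j, IdentDistrib (z' i) (z' j) ℙ ℙ := fun i j =>
    ⟨(hzmeas' i).aemeasurable, (hzmeas' j).aemeasurable, by rw [hgauss' i, hgauss' j]⟩
  have hpair : ∀ i, IndepFun (z i) (z' i) ℙ := fun i =>
    hindep.indepFun (show (Sum.inl i : ℕ ⊕ ℕ) ≠ Sum.inr i by simp)
  have idpair : ∀ i j, IdentDistrib (fun ω => (z i ω, z' i ω)) (fun ω => (z j ω, z' j ω)) ℙ ℙ := by
    intro i j
    refine ⟨((hzmeas i).prodMk (hzmeas' i)).aemeasurable,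
      ((hzmeas j).prodMk (hzmeas' j)).aemeasurable, ?_⟩
    rw [(indepFun_iff_map_prod_eq_prod_map_map (hzmeas i).aemeasurable
        (hzmeas' i).aemeasurable).mp (hpair i),
      (indepFun_iff_map_prod_eq_prod_map_map (hzmeas j).aemeasurable
        (hzmeas' j).aemeasurable).mp (hpair j),
      hgauss i, hgauss j, hgauss' i, hgauss' j]
  have idmul : ∀ i j, IdentDistrib (fun ω => z i ω * z' i ω) (fun ω => z j ω * z' j ω) ℙ ℙ :=
    fun i j => (idpair i j).comp (measurable_fst.mul measurable_snd)
  have hmulindep : ∀ i j, i ≠ j →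
      IndepFun (fun ω => z i ω * z' i ω) (fun ω => z j ω * z' j ω) ℙ := by
    intro i j hij
    exact hindep.indepFun_mul_mul hmeas (Sum.inl i) (Sum.inr i) (Sum.inl j) (Sum.inr j)
      (by simp [hij]) (by simp) (by simp) (by simp [hij])
  have hmulint : ∀ i, Integrable (fun ω => z i ω * z' i ω) ℙ := fun i =>
    (hpair i).integrable_mul (hmz i).1 (hmz' i).1
  have hmulzero : ∀ i, ∫ ω, z i ω * z' i ω ∂ℙ = 0 := by
    intro i
    have h := (hpair i).integral_mul_eq_mul_integral (hzmeas i).aestronglyMeasurable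
      (hzmeas' i).aestronglyMeasurable
    have h2 : ∫ ω, z i ω * z' i ω ∂ℙ = ∫ ω, (z i * z' i) ω ∂ℙ := rfl
    rw [h2]
    rw [show (∫ ω, (z i * z' i) ω ∂ℙ) = (ℙ : Measure Ω)[z i * z' i] from rfl, h,
      (hmz i).2.1, (hmz' i).2.1, mul_zero]
  -- the five limits
  have hA : ∀ᵐ ω ∂ℙ, Tendsto (fun m : ℕ => (∑ k ∈ Finset.range m, (z (1+k) ω)^2) / m)
      atTop (nhds 1) := by
    have h := strong_law_ae_real (fun k => fun ω => (z (1+k) ω)^2)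
      (hmz (1+0)).2.2.1
      (fun k l hkl => ((hindep.indepFun
        (show (Sum.inl (1+k) : ℕ ⊕ ℕ) ≠ Sum.inl (1+l) by simpa using hkl)).comp hsq hsq))
      (fun k => (idz (1+k) (1+0)).comp hsq)
    have hval : (∫ x, (fun (k : ℕ) => fun ω => (z (1+k) ω)^2) 0 x ∂ℙ) = 1 := (hmz (1+0)).2.2.2
    rwa [hval] at h
  have hE : ∀ᵐ ω ∂ℙ, Tendsto (fun m : ℕ => (∑ k ∈ Finset.range m, (z' (1+k) ω)^2) / m)
      atTop (nhds 1) := by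
    have h := strong_law_ae_real (fun k => fun ω => (z' (1+k) ω)^2)
      (hmz' (1+0)).2.2.1
      (fun k l hkl => ((hindep.indepFun
        (show (Sum.inr (1+k) : ℕ ⊕ ℕ) ≠ Sum.inr (1+l) by simpa using hkl)).comp hsq hsq))
      (fun k => (idz' (1+k) (1+0)).comp hsq)
    have hval : (∫ x, (fun (k : ℕ) => fun ω => (z' (1+k) ω)^2) 0 x ∂ℙ) = 1 := (hmz' (1+0)).2.2.2
    rwa [hval] at h
  have hF : ∀ᵐ ω ∂ℙ, Tendsto (fun m : ℕ => (∑ k ∈ Finset.range m, z (1+k) ω * z' (1+k) ω) / m)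
      atTop (nhds 0) := by
    have h := strong_law_ae_real (fun k => fun ω => z (1+k) ω * z' (1+k) ω)
      (hmulint (1+0))
      (fun k l hkl => hmulindep (1+k) (1+l) (by simpa using hkl))
      (fun k => idmul (1+k) (1+0))
    have hval : (∫ x, (fun (k : ℕ) => fun ω => z (1+k) ω * z' (1+k) ω) 0 x ∂ℙ) = 0 :=
      hmulzero (1+0)
    rwa [hval] at h
  have hB : ∀ᵐ ω ∂ℙ, Tendsto (fun m : ℕ => (∑ i ∈ Iout m, (z' i ω)^2) / m)
      atTop (nhds (p * 1)) := by
    have h := slln_subset (fun i => fun ω => (z' i ω)^2)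
      (hmz' 0).2.2.1
      (fun k l hkl => ((hindep.indepFun
        (show (Sum.inr k : ℕ ⊕ ℕ) ≠ Sum.inr l by simpa using hkl)).comp hsq hsq))
      (fun i j => (idz' i j).comp hsq)
      Iout hInested p hp0 hK
    have hval : (∫ a, (fun (i : ℕ) => fun ω => (z' i ω)^2) 0 a ∂ℙ) = 1 := (hmz' 0).2.2.2
    rwa [hval] at h
  have hC : ∀ᵐ ω ∂ℙ, Tendsto (fun m : ℕ => (∑ i ∈ Iout m, z i ω * z' i ω) / m)
      atTop (nhds (p * 0)) := by
    have h := slln_subset (fun i => fun ω => z i ω * z' i ω)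
      (hmulint 0)
      (fun k l hkl => hmulindep k l hkl)
      (fun i j => idmul i j)
      Iout hInested p hp0 hK
    have hval : (∫ a, (fun (i : ℕ) => fun ω => z i ω * z' i ω) 0 a ∂ℙ) = 0 := hmulzero 0
    rwa [hval] at h
  -- Icc/range conversion
  have hIcc : ∀ (f : ℕ → ℝ) (m : ℕ), ∑ i ∈ Finset.Icc 1 m, f i
      = ∑ k ∈ Finset.range m, f (1+k) := by
    intro f m
    rw [← Finset.Ico_add_one_right_eq_Icc, Finset.sum_Ico_eq_sum_range]
    simp
  have hsqrtτ : Tendsto (fun m => Real.sqrt (τ m)) atTop (nhds (Real.sqrt t)) :=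
    (Real.continuous_sqrt.tendsto t).comp hτ
  filter_upwards [hA, hE, hF, hB, hC] with ω h1 h2 h3 h4 h5
  have h1' : Tendsto (fun m : ℕ => (∑ i ∈ Finset.Icc 1 m, (z i ω)^2) / m) atTop (nhds 1) := by
    refine h1.congr fun m => ?_
    rw [hIcc (fun i => (z i ω)^2) m]
  have h2' : Tendsto (fun m : ℕ => (∑ i ∈ Finset.Icc 1 m, (z' i ω)^2) / m) atTop (nhds 1) := by
    refine h2.congr fun m => ?_
    rw [hIcc (fun i => (z' i ω)^2) m]
  have h3' : Tendsto (fun m : ℕ => (∑ i ∈ Finset.Icc 1 m, z i ω * z' i ω) / m) atTop (nhds 0) := by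
    refine h3.congr fun m => ?_
    rw [hIcc (fun i => z i ω * z' i ω) m]
  -- algebraic identity
  have key : ∀ m : ℕ, (∑ i ∈ Finset.Icc 1 m,
      (σ * z i ω - (if i ∈ Iout m then Real.sqrt (τ m) * z' i ω else σ * z' i ω)) ^ 2)
      = σ^2 * (∑ i ∈ Finset.Icc 1 m, (z i ω)^2)
        + τ m * (∑ i ∈ Iout m, (z' i ω)^2)
        - 2*σ*Real.sqrt (τ m) * (∑ i ∈ Iout m, z i ω * z' i ω)
        + σ^2 * ((∑ i ∈ Finset.Icc 1 m, (z' i ω)^2) - (∑ i ∈ Iout m, (z' i ω)^2))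
        - 2*σ^2 * ((∑ i ∈ Finset.Icc 1 m, z i ω * z' i ω) - (∑ i ∈ Iout m, z i ω * z' i ω)) := by
    intro m
    have expand : ∀ (s : Finset ℕ) (a : ℝ), (∑ i ∈ s, (σ * z i ω - a * z' i ω)^2)
        = σ^2 * (∑ i ∈ s, (z i ω)^2) + a^2 * (∑ i ∈ s, (z' i ω)^2)
          - 2*σ*a*(∑ i ∈ s, z i ω * z' i ω) := by
      intro s a
      rw [Finset.mul_sum, Finset.mul_sum, Finset.mul_sum, ← Finset.sum_add_distrib,
        ← Finset.sum_sub_distrib]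
      exact Finset.sum_congr rfl fun i _ => by ring
    have split : (∑ i ∈ Finset.Icc 1 m,
        (σ * z i ω - (if i ∈ Iout m then Real.sqrt (τ m) * z' i ω else σ * z' i ω)) ^ 2)
        = (∑ i ∈ Finset.Icc 1 m \ Iout m, (σ * z i ω - σ * z' i ω)^2)
          + (∑ i ∈ Iout m, (σ * z i ω - Real.sqrt (τ m) * z' i ω)^2) := by
      rw [← Finset.sum_sdiff (hIsub m)]
      congr 1
      · exact Finset.sum_congr rfl fun i hi => by rw [if_neg (Finset.mem_sdiff.mp hi).2]
      · exact Finset.sum_congr rfl fun i hi => by rw [if_pos hi]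
    have hsd : ∀ (f : ℕ → ℝ), (∑ i ∈ Finset.Icc 1 m \ Iout m, f i)
        = (∑ i ∈ Finset.Icc 1 m, f i) - (∑ i ∈ Iout m, f i) := by
      intro f
      rw [eq_sub_iff_add_eq, Finset.sum_sdiff (hIsub m)]
    rw [split, expand _ σ, expand _ (Real.sqrt (τ m)),
      hsd (fun i => (z i ω)^2), hsd (fun i => (z' i ω)^2), hsd (fun i => z i ω * z' i ω),
      Real.sq_sqrt (hτpos m).le]
    ring
  -- combine limits
  have T1 : Tendsto (fun m : ℕ => σ^2 * ((∑ i ∈ Finset.Icc 1 m, (z i ω)^2) / m))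
      atTop (nhds (σ^2 * 1)) := h1'.const_mul _
  have T2 : Tendsto (fun m : ℕ => τ m * ((∑ i ∈ Iout m, (z' i ω)^2) / m))
      atTop (nhds (t * (p * 1))) := hτ.mul h4
  have T3 : Tendsto (fun m : ℕ => 2*σ*Real.sqrt (τ m) * ((∑ i ∈ Iout m, z i ω * z' i ω) / m))
      atTop (nhds (2*σ*Real.sqrt t * (p * 0))) :=
    (((tendsto_const_nhds (x := 2*σ)).mul hsqrtτ).mul h5)
  have T4 : Tendsto (fun m : ℕ => σ^2 * ((∑ i ∈ Finset.Icc 1 m, (z' i ω)^2) / m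
      - (∑ i ∈ Iout m, (z' i ω)^2) / m)) atTop (nhds (σ^2 * (1 - p * 1))) :=
    (h2'.sub h4).const_mul _
  have T5 : Tendsto (fun m : ℕ => 2*σ^2 * ((∑ i ∈ Finset.Icc 1 m, z i ω * z' i ω) / m
      - (∑ i ∈ Iout m, z i ω * z' i ω) / m)) atTop (nhds (2*σ^2 * (0 - p * 0))) :=
    (h3'.sub h5).const_mul _
  have Ttot := (((T1.add T2).sub T3).add T4).sub T5
  rw [show p * (t - σ ^ 2) + 2 * σ ^ 2
    = σ^2 * 1 + t * (p * 1) - 2*σ*Real.sqrt t * (p * 0) + σ^2 * (1 - p * 1)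
      - 2*σ^2 * (0 - p * 0) by ring]
  refine Tendsto.congr (fun m => ?_) Ttot
  rw [key m]
  ring
end
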